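/- Let G ⊊ ℝⁿ be a domain (nonempty, open, connected, proper subset). Then for all x, y ∈ G one has s_G(x,y) ≤ (1/log 2) · j_G(x,y). -/
import Mathlib


/-- The triangular ratio metric `s_G(x,y) = sup_{z ∈ ∂G} |x−y|/(|z−x|+|z−y|)`. -/
noncomputable def sMetric {n : ℕ} (G : Set (EuclideanSpace ℝ (Fin n)))
    (x y : EuclideanSpace ℝ (Fin n)) : ℝ :=
  ⨆ z ∈ frontier G, dist x y / (dist z x + dist z y)

/-- The j-metric `j_G(x,y) = log(1 + |x−y|/min{d_G(x), d_G(y)})`,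
where `d_G(z) = dist(z, ∂G)`. -/
noncomputable def jMetric {n : ℕ} (G : Set (EuclideanSpace ℝ (Fin n)))
    (x y : EuclideanSpace ℝ (Fin n)) : ℝ :=
  Real.log (1 + dist x y /
    min (Metric.infDist x (frontier G)) (Metric.infDist y (frontier G)))

/-- Key elementary inequality, by concavity of `log`:
`(u/2) * log 2 ≤ log (1+u)` on `[0, 2]`. -/
lemma half_mul_log_two_le_log_one_add {u : ℝ} (hu0 : 0 ≤ u) (hu2 : u ≤ 2) :
    u / 2 * Real.log 2 ≤ Real.log (1 + u) := by
  have hc := strictConcaveOn_log_Ioi.concaveOn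
  have h1 : (1 : ℝ) ∈ Set.Ioi (0 : ℝ) := by norm_num
  have h3 : (3 : ℝ) ∈ Set.Ioi (0 : ℝ) := by norm_num
  have ha : (0 : ℝ) ≤ 1 - u / 2 := by linarith
  have hb : (0 : ℝ) ≤ u / 2 := by linarith
  have hab : (1 - u / 2) + u / 2 = 1 := by ring
  have hmain := hc.2 h1 h3 ha hb hab
  have hcomb : (1 - u / 2) • (1 : ℝ) + (u / 2) • (3 : ℝ) = 1 + u := by
    simp only [smul_eq_mul]; ring
  rw [hcomb] at hmain
  have hlog3 : Real.log 2 ≤ Real.log 3 :=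
    Real.log_le_log (by norm_num) (by norm_num)
  calc u / 2 * Real.log 2 ≤ u / 2 * Real.log 3 :=
        mul_le_mul_of_nonneg_left hlog3 hb
    _ = (1 - u / 2) • Real.log 1 + (u / 2) • Real.log 3 := by
        simp [smul_eq_mul]
    _ ≤ Real.log (1 + u) := hmain

/-- Let G ⊊ ℝⁿ be a domain (nonempty, open, connected, proper subset). Then for all
x, y ∈ G one has s_G(x,y) ≤ (1/log 2) · j_G(x,y). -/
theorem s_le_inv_log_two_mul_j (n : ℕ) (G : Set (EuclideanSpace ℝ (Fin n)))
    (hGo : IsOpen G) (hGc : IsConnected G) (hGp : G ≠ Set.univ)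
    (x y : EuclideanSpace ℝ (Fin n)) (hx : x ∈ G) (hy : y ∈ G) :
    sMetric G x y ≤ (1 / Real.log 2) * jMetric G x y := by
  have hlog2 : (0 : ℝ) < Real.log 2 := Real.log_pos (by norm_num)
  -- the frontier is nonempty
  have hfne : (frontier G).Nonempty := by
    rw [Set.nonempty_iff_ne_empty]
    intro h
    rcases frontier_eq_empty_iff.1 h with h' | h'
    · exact hGc.nonempty.ne_empty h'
    · exact hGp h'
  -- distances to the frontier are positive
  have hdx : 0 < Metric.infDist x (frontier G) :=
    (isClosed_frontier.notMem_iff_infDist_pos hfne).1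
      (fun h => h.2 (by rwa [hGo.interior_eq]))
  have hdy : 0 < Metric.infDist y (frontier G) :=
    (isClosed_frontier.notMem_iff_infDist_pos hfne).1
      (fun h => h.2 (by rwa [hGo.interior_eq]))
  set m : ℝ := min (Metric.infDist x (frontier G)) (Metric.infDist y (frontier G)) with hm
  have hmpos : 0 < m := lt_min hdx hdy
  set t : ℝ := dist x y with ht
  have ht0 : 0 ≤ t := dist_nonneg
  set B : ℝ := (1 / Real.log 2) * jMetric G x y with hB
  have hj : jMetric G x y = Real.log (1 + t / m) := rfl
  have hjnn : 0 ≤ jMetric G x y := by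
    rw [hj]
    apply Real.log_nonneg
    have : 0 ≤ t / m := div_nonneg ht0 hmpos.le
    linarith
  have hBnn : 0 ≤ B := mul_nonneg (by positivity) hjnn
  -- main bound for each boundary point
  have hkey : ∀ z ∈ frontier G, t / (dist z x + dist z y) ≤ B := by
    intro z hz
    have hzx : m ≤ dist z x := le_trans (min_le_left _ _)
      (by rw [dist_comm]; exact Metric.infDist_le_dist_of_mem hz)
    have hzy : m ≤ dist z y := le_trans (min_le_right _ _)
      (by rw [dist_comm]; exact Metric.infDist_le_dist_of_mem hz)
    have htri : t ≤ dist z x + dist z y := by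
      rw [ht, dist_comm z x]; exact dist_triangle x z y
    have hDpos : 0 < dist z x + dist z y := by linarith
    rcases le_or_gt t (2 * m) with hcase | hcase
    · -- t ≤ 2m : use denominator ≥ 2m and the concavity bound
      have h1 : t / (dist z x + dist z y) ≤ t / (2 * m) := by
        gcongr; linarith
      have h2 : t / (2 * m) ≤ B := by
        have hu0 : 0 ≤ t / m := div_nonneg ht0 hmpos.le
        have hu2 : t / m ≤ 2 := (div_le_iff₀ hmpos).2 (by linarith)
        have haux : t / (2 * m) * Real.log 2 ≤ Real.log (1 + t / m) := by
          have h := half_mul_log_two_le_log_one_add hu0 hu2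
          have : t / (2 * m) = t / m / 2 := by
            rw [div_div, mul_comm]
          rw [this]; exact h
        rw [hB, hj, one_div, ← div_eq_inv_mul]
        exact (le_div_iff₀ hlog2).2 haux
      exact h1.trans h2
    · -- t > 2m : the quotient is ≤ 1 and B ≥ 1
      have h1 : t / (dist z x + dist z y) ≤ 1 := (div_le_one hDpos).2 htri
      have h2 : (1 : ℝ) ≤ B := by
        have h3 : (2 : ℝ) ≤ 1 + t / m := by
          have : (1 : ℝ) ≤ t / m := (one_le_div hmpos).2 (by linarith)
          linarith
        have hlj : Real.log 2 ≤ jMetric G x y := by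
          rw [hj]; exact Real.log_le_log (by norm_num) h3
        rw [hB, one_div, ← div_eq_inv_mul, le_div_iff₀ hlog2, one_mul]
        exact hlj
      exact h1.trans h2
  -- conclude with the supremum
  rw [sMetric]
  apply Real.iSup_le _ hBnn
  intro z
  apply Real.iSup_le _ hBnn
  intro hz
  exact hkey z hz
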